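/- arXiv:2302.03115 — 2 statements merged into one kernel-verified Lean document; each statement's English description precedes it below -/
import Mathlib

section
/- Let (x_1,y_1),...,(x_k,y_k) be drawn i.i.d. from D and let α = (1/k)·Σ_{i=1}^k y_i. For any bounded measurable g : X × {0,1} → ℝ^d, define the soft label corrected function g̃(x, α) = (k(α − p) + p)·g(x, 1) + (k(p − α) + (1 − p))·g(x, 0). Then for every index j ∈ [k], E[g̃(x_j, α)] = E_{(x,y)∼D}[g(x, y)], where the expectation on the left is over the bag. -/
open MeasureTheory Real

noncomputable section

/-- Real value of a `{0,1}` label encoded as a `Bool`. -/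
def bval (b : Bool) : ℝ := if b then 1 else 0

lemma pi_map_eval {Z : Type*} [MeasurableSpace Z] (D : Measure Z) [IsProbabilityMeasure D]
    {k : ℕ} (j : Fin k) :
    (Measure.pi fun _ : Fin k => D).map (fun ω => ω j) = D := by
  ext s hs
  rw [Measure.map_apply (measurable_pi_apply j) hs]
  have hpre : (fun ω : Fin k → Z => ω j) ⁻¹' s
      = Set.univ.pi (Function.update (fun _ : Fin k => (Set.univ : Set Z)) j s) := by
    ext ω
    simp only [Set.mem_preimage, Set.mem_pi, Set.mem_univ, forall_true_left,
      Function.update_apply]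
    constructor
    · intro hω i; split <;> simp_all
    · intro hω; have := hω j; simpa using this
  rw [hpre, Measure.pi_pi, ← Finset.mul_prod_erase _ _ (Finset.mem_univ j)]
  have hone : ∏ l ∈ Finset.univ.erase j,
      D (Function.update (fun _ : Fin k => (Set.univ : Set Z)) j s l) = 1 := by
    apply Finset.prod_eq_one
    intro l hl
    rw [Function.update_apply, if_neg (Finset.mem_erase.mp hl).1]
    exact measure_univ
  rw [hone]
  simp

lemma pi_map_eval_pair {Z : Type*} [MeasurableSpace Z] (D : Measure Z) [IsProbabilityMeasure D]
    {k : ℕ} (i j : Fin k) (hij : i ≠ j) :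
    (Measure.pi fun _ : Fin k => D).map (fun ω => (ω i, ω j)) = D.prod D := by
  symm
  apply Measure.prod_eq
  intro s t hs ht
  rw [Measure.map_apply ((measurable_pi_apply i).prodMk (measurable_pi_apply j)) (hs.prod ht)]
  have hpre : (fun ω : Fin k → Z => (ω i, ω j)) ⁻¹' (s ×ˢ t)
      = Set.univ.pi
          (Function.update (Function.update (fun _ : Fin k => (Set.univ : Set Z)) i s) j t) := by
    ext ω
    simp only [Set.mem_preimage, Set.mem_prod, Set.mem_pi, Set.mem_univ, forall_true_left,
      Function.update_apply]
    constructor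
    · rintro ⟨h1, h2⟩ l
      split
      · simp_all
      · split <;> simp_all
    · intro hω
      refine ⟨?_, ?_⟩
      · have := hω i; rw [if_neg hij] at this; simpa using this
      · have := hω j; simpa using this
  rw [hpre, Measure.pi_pi, ← Finset.mul_prod_erase _ _ (Finset.mem_univ j),
    ← Finset.mul_prod_erase _ _ (Finset.mem_erase.mpr ⟨hij, Finset.mem_univ i⟩)]
  have hone : ∏ l ∈ (Finset.univ.erase j).erase i,
      D (Function.update (Function.update (fun _ : Fin k => (Set.univ : Set Z)) i s) j t l)
        = 1 := by
    apply Finset.prod_eq_one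
    intro l hl
    obtain ⟨hli, hl'⟩ := Finset.mem_erase.mp hl
    obtain ⟨hlj, -⟩ := Finset.mem_erase.mp hl'
    rw [Function.update_apply, if_neg hlj, Function.update_apply, if_neg hli]
    exact measure_univ
  rw [hone]
  simp [Function.update_apply, hij, mul_comm]

/-- unbiasedness of the soft label corrected function.
With `g̃(x,α) = (k(α−p)+p)·g(x,1) + (k(p−α)+(1−p))·g(x,0)` and `α` the label
proportion of a bag of `k` i.i.d. draws from `D`, for every `j ∈ [k]` one has
`E[g̃(x_j, α)] = E_{(x,y)∼D}[g(x,y)]`. -/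
theorem stmt_3
    {X : Type*} [MeasurableSpace X] {d : ℕ}
    (D : Measure (X × Bool)) [IsProbabilityMeasure D]
    (p : ℝ) (hp : p = (D {z : X × Bool | z.2 = true}).toReal)
    (k : ℕ) (hk : 1 ≤ k) (j : Fin k)
    (g : X × Bool → EuclideanSpace ℝ (Fin d)) (hg : Measurable g)
    (M : ℝ) (hgb : ∀ z, ‖g z‖ ≤ M)
    -- label proportion of the bag
    (α : (Fin k → X × Bool) → ℝ)
    (hα : ∀ ω, α ω = (1 / (k:ℝ)) * ∑ i, bval (ω i).2)
    -- the soft label corrected function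
    (gtil : X → ℝ → EuclideanSpace ℝ (Fin d))
    (hgtil : ∀ x a, gtil x a
        = ((k:ℝ) * (a - p) + p) • g (x, true)
          + ((k:ℝ) * (p - a) + (1 - p)) • g (x, false)) :
    ∫ ω, gtil (ω j).1 (α ω) ∂(Measure.pi fun _ : Fin k => D) = ∫ z, g z ∂D := by
  set μ : Measure (Fin k → X × Bool) := Measure.pi fun _ : Fin k => D with hμ
  have hkne : (k:ℝ) ≠ 0 := by positivity
  -- auxiliary functions
  set h : X × Bool → EuclideanSpace ℝ (Fin d) :=
    fun z => g (z.1, true) - g (z.1, false) with hh_def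
  set φ : X × Bool → ℝ := fun z => bval z.2 - p with hφ_def
  have hbvalm : Measurable (fun z : X × Bool => bval z.2) :=
    (measurable_from_top (f := bval)).comp measurable_snd
  have hφm : Measurable φ := hbvalm.sub measurable_const
  have hhm : Measurable h :=
    (hg.comp (measurable_fst.prodMk measurable_const)).sub
      (hg.comp (measurable_fst.prodMk measurable_const))
  -- key pointwise identity
  have key : ∀ ω : Fin k → X × Bool,
      gtil (ω j).1 (α ω)
        = g (ω j) + ∑ i ∈ Finset.univ.erase j, φ (ω i) • h (ω j) := by
    intro ω
    have hsum : (k:ℝ) * α ω = ∑ i, bval (ω i).2 := by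
      rw [hα ω]; field_simp
    have hsplit : ∑ i, bval (ω i).2
        = bval (ω j).2 + ∑ i ∈ Finset.univ.erase j, bval (ω i).2 :=
      (Finset.add_sum_erase _ _ (Finset.mem_univ j)).symm
    have hcard : ((Finset.univ.erase j).card : ℝ) = (k:ℝ) - 1 := by
      rw [Finset.card_erase_of_mem (Finset.mem_univ j)]
      simp [Nat.cast_sub hk]
    have hS : ∑ i ∈ Finset.univ.erase j, φ (ω i)
        = (∑ i ∈ Finset.univ.erase j, bval (ω i).2) - ((k:ℝ) - 1) * p := by
      rw [hφ_def]
      rw [Finset.sum_sub_distrib, Finset.sum_const, nsmul_eq_mul, hcard]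
    set S : ℝ := ∑ i ∈ Finset.univ.erase j, bval (ω i).2 with hSdef
    have hc1 : (k:ℝ) * (α ω - p) + p = bval (ω j).2 + (S - ((k:ℝ) - 1) * p) := by
      have h1 : (k:ℝ) * α ω = bval (ω j).2 + S := by rw [hsum, hsplit]
      linear_combination h1
    have hc0 : (k:ℝ) * (p - α ω) + (1 - p)
        = (1 - bval (ω j).2) - (S - ((k:ℝ) - 1) * p) := by
      have h1 : (k:ℝ) * α ω = bval (ω j).2 + S := by rw [hsum, hsplit]
      linear_combination -h1
    have hgj : g (ω j) = bval (ω j).2 • g ((ω j).1, true)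
        + (1 - bval (ω j).2) • g ((ω j).1, false) := by
      rcases hωj : ω j with ⟨x, b⟩
      cases b <;> simp [bval]
    rw [hgtil, hc1, hc0, ← Finset.sum_smul, hS, hgj]
    rw [hh_def]
    simp only [smul_sub, add_smul, sub_smul, one_smul]
    abel
  simp only [key]
  -- integrability facts
  have hne : Nonempty (X × Bool) := by
    by_contra hcon
    rw [not_nonempty_iff] at hcon
    have h1 : D Set.univ = 1 := measure_univ
    rw [Set.univ_eq_empty_iff.mpr hcon] at h1
    simp at h1
  have hM : 0 ≤ M := le_trans (norm_nonneg _) (hgb (Classical.arbitrary _))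
  have hφb : ∀ z, ‖φ z‖ ≤ 1 + |p| := by
    intro z
    have h1 : |bval z.2| ≤ 1 := by cases hz : z.2 <;> simp [bval, hz]
    calc ‖φ z‖ = |bval z.2 - p| := by rw [hφ_def, Real.norm_eq_abs]
      _ ≤ |bval z.2| + |p| := abs_sub _ _
      _ ≤ 1 + |p| := by linarith
  have hhb : ∀ z, ‖h z‖ ≤ 2 * M := by
    intro z
    calc ‖h z‖ ≤ ‖g (z.1, true)‖ + ‖g (z.1, false)‖ := norm_sub_le _ _
      _ ≤ 2 * M := by have := hgb (z.1, true); have := hgb (z.1, false); linarith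
  -- integrability of the pieces
  have hint1 : Integrable (fun ω : Fin k → X × Bool => g (ω j)) μ := by
    refine (integrable_const M).mono'
      ((hg.comp (measurable_pi_apply j)).aestronglyMeasurable) ?_
    exact Filter.Eventually.of_forall fun ω => hgb (ω j)
  have hint2 : ∀ i : Fin k, Integrable (fun ω : Fin k → X × Bool => φ (ω i) • h (ω j)) μ := by
    intro i
    refine (integrable_const ((1 + |p|) * (2 * M))).mono'
      (((hφm.comp (measurable_pi_apply i)).smul (hhm.comp (measurable_pi_apply j))).aestronglyMeasurable) ?_
    refine Filter.Eventually.of_forall fun ω => ?_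
    rw [norm_smul]
    exact mul_le_mul (hφb _) (hhb _) (norm_nonneg _) (by positivity)
  rw [integral_add hint1 (integrable_finset_sum _ fun i _ => hint2 i),
    integral_finset_sum _ fun i _ => hint2 i]
  -- the first integral
  have hmap1 : ∫ ω, g (ω j) ∂μ = ∫ z, g z ∂D := by
    rw [← pi_map_eval D j,
      integral_map (measurable_pi_apply j).aemeasurable hg.aestronglyMeasurable]
  -- the cross terms vanish
  have hφint : ∫ z, φ z ∂D = 0 := by
    have hset : MeasurableSet {z : X × Bool | z.2 = true} :=
      measurable_snd (measurableSet_singleton true)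
    have hbval : ∫ z, bval z.2 ∂D = p := by
      have hind : (fun z : X × Bool => bval z.2)
          = Set.indicator {z : X × Bool | z.2 = true} (fun _ => (1:ℝ)) := by
        funext z
        by_cases hz : z.2 = true <;> simp [bval, hz, Set.indicator]
      rw [hind, integral_indicator_const _ hset, hp, smul_eq_mul, mul_one, measureReal_def]
    have hbint : Integrable (fun z : X × Bool => bval z.2) D := by
      refine (integrable_const (1:ℝ)).mono' hbvalm.aestronglyMeasurable ?_
      exact Filter.Eventually.of_forall fun z => by
        cases hz : z.2 <;> simp [bval, hz]
    rw [hφ_def]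
    rw [integral_sub hbint (integrable_const p), hbval, integral_const]
    simp
  have hcross : ∀ i ∈ Finset.univ.erase j,
      ∫ ω, φ (ω i) • h (ω j) ∂μ = 0 := by
    intro i hi
    have hij : i ≠ j := (Finset.mem_erase.mp hi).1
    have hmap2 : μ.map (fun ω => (ω i, ω j)) = D.prod D := pi_map_eval_pair D i j hij
    have : ∫ ω, φ (ω i) • h (ω j) ∂μ
        = ∫ z : (X × Bool) × (X × Bool), φ z.1 • h z.2 ∂(D.prod D) := by
      rw [← hmap2,
        integral_map ((measurable_pi_apply i).prodMk (measurable_pi_apply j)).aemeasurable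
          ((hφm.comp measurable_fst).smul (hhm.comp measurable_snd)).aestronglyMeasurable]
    rw [this, integral_prod_smul, hφint, zero_smul]
  rw [Finset.sum_congr rfl hcross, hmap1]
  simp
end
end

section
/- Let (x_1,y_1),...,(x_k,y_k) be drawn i.i.d. from a distribution D on X × {1,...,C}, and for each class c ∈ {1,...,C} let α_c = (1/k)·Σ_{i=1}^k 1{y_i = c} and p_c = P_{(x,y)∼D}(y = c). For any bounded measurable g : X × {1,...,C} → ℝ^d define the soft label corrected function g̃(x, α) = Σ_{c=1}^C (k·α_c − (k−1)·p_c)·g(x, c). Then for every index i ∈ [k], E[g̃(x_i, α)] = E_{(x,y)∼D}[g(x, y)], where the expectation on the left is over the bag. -/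
open MeasureTheory Real

noncomputable section

/-- Auxiliary: evaluation at a coordinate pushes the product of copies of a
probability measure to that measure. -/
lemma map_eval_pi {ι Z : Type*} [Fintype ι] [DecidableEq ι] [MeasurableSpace Z]
    (D : Measure Z) [IsProbabilityMeasure D] (i : ι) :
    (Measure.pi fun _ : ι => D).map (fun ω => ω i) = D := by
  ext s hs
  rw [Measure.map_apply (measurable_pi_apply i) hs]
  have hpre : (fun ω : ι → Z => ω i) ⁻¹' s
      = Set.pi Set.univ (fun l => if l = i then s else Set.univ) := by
    ext ω
    simp only [Set.mem_preimage, Set.mem_pi, Set.mem_univ, forall_true_left]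
    constructor
    · intro h l; split <;> simp_all
    · intro h; simpa using h i
  rw [hpre, Measure.pi_pi]
  rw [Finset.prod_eq_single i]
  · simp
  · intro b _ hb; simp [hb]
  · simp

/-- Auxiliary: the pair of two distinct coordinates pushes the product of copies
of a probability measure to the two-fold product. -/
lemma map_pair_pi {ι Z : Type*} [Fintype ι] [DecidableEq ι] [MeasurableSpace Z]
    (D : Measure Z) [IsProbabilityMeasure D] {i j : ι} (hij : i ≠ j) :
    (Measure.pi fun _ : ι => D).map (fun ω => (ω i, ω j)) = D.prod D := by
  refine (Measure.prod_eq fun s t hs ht => ?_).symm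
  rw [Measure.map_apply ((measurable_pi_apply i).prodMk (measurable_pi_apply j))
    (hs.prod ht)]
  have hpre : (fun ω : ι → Z => (ω i, ω j)) ⁻¹' (s ×ˢ t)
      = Set.pi Set.univ (fun l => if l = i then s else if l = j then t else Set.univ) := by
    ext ω
    simp only [Set.mem_preimage, Set.mem_prod, Set.mem_pi, Set.mem_univ, forall_true_left]
    constructor
    · rintro ⟨h1, h2⟩ l; split_ifs <;> simp_all
    · intro h
      refine ⟨by simpa using h i, ?_⟩
      have := h j
      simp only [if_neg hij.symm, if_pos rfl] at this
      exact this
  rw [hpre, Measure.pi_pi]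
  have hfac : ∀ l : ι, D (if l = i then s else if l = j then t else Set.univ)
      = (if l = i then D s else 1) * (if l = j then D t else 1) := by
    intro l
    split_ifs with h h' <;> simp_all
  simp only [hfac]
  rw [Finset.prod_mul_distrib, Finset.prod_ite_eq', Finset.prod_ite_eq']
  simp

/-- Auxiliary: a bounded a.e.-strongly-measurable function is integrable on a
finite measure. -/
lemma integrable_of_bdd {β E : Type*} [MeasurableSpace β] [NormedAddCommGroup E]
    {ν : Measure β} [IsFiniteMeasure ν] {f : β → E}
    (hm : AEStronglyMeasurable f ν) {B : ℝ} (hb : ∀ b, ‖f b‖ ≤ B) :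
    Integrable f ν :=
  ⟨hm, HasFiniteIntegral.of_bounded (Filter.Eventually.of_forall hb)⟩

/-- Theorem 5, multiclass unbiasedness of the soft label
corrected function. With class proportions `α_c = (1/k)Σ_i 1{y_i = c}` and
`p_c = P(y = c)`, the function `g̃(x,α) = Σ_c (k·α_c − (k−1)·p_c)·g(x,c)`
satisfies `E[g̃(x_i, α)] = E_{(x,y)∼D}[g(x,y)]` for every `i ∈ [k]`. -/
theorem stmt_14
    {X : Type*} [MeasurableSpace X] {d : ℕ} (C : ℕ) (hC : 2 ≤ C)
    (D : Measure (X × Fin C)) [IsProbabilityMeasure D]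
    (p : Fin C → ℝ) (hp : ∀ c, p c = (D {z : X × Fin C | z.2 = c}).toReal)
    (k : ℕ) (hk : 1 ≤ k) (i : Fin k)
    (g : X × Fin C → EuclideanSpace ℝ (Fin d)) (hg : Measurable g)
    (M : ℝ) (hgb : ∀ z, ‖g z‖ ≤ M)
    -- class proportions of the bag
    (α : Fin C → (Fin k → X × Fin C) → ℝ)
    (hα : ∀ c ω, α c ω = (1 / (k:ℝ)) * ∑ i', if (ω i').2 = c then (1:ℝ) else 0)
    -- the soft label corrected function
    (gtil : X → (Fin C → ℝ) → EuclideanSpace ℝ (Fin d))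
    (hgtil : ∀ x a, gtil x a
        = ∑ c, ((k:ℝ) * a c - ((k:ℝ) - 1) * p c) • g (x, c)) :
    ∫ ω, gtil (ω i).1 (fun c => α c ω) ∂(Measure.pi fun _ : Fin k => D)
      = ∫ z, g z ∂D := by
  classical
  set μ : Measure (Fin k → (X × Fin C)) := Measure.pi fun _ : Fin k => D with hμ
  have hkR : (k:ℝ) ≠ 0 := Nat.cast_ne_zero.mpr (by omega)
  -- nonemptiness, hence `0 ≤ M`
  have hne : Nonempty (X × Fin C) := by
    by_contra h
    have : IsEmpty (X × Fin C) := not_nonempty_iff.mp h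
    have h1 : D Set.univ = 1 := measure_univ
    rw [Set.univ_eq_empty_iff.mpr this] at h1
    simp at h1
  have hM : 0 ≤ M := le_trans (norm_nonneg _) (hgb (Classical.arbitrary (X × Fin C)))
  -- basic pieces
  set G : Fin C → (X × Fin C) → EuclideanSpace ℝ (Fin d) := fun c z => g (z.1, c) with hG
  set I : Fin C → (X × Fin C) → ℝ := fun c z => if z.2 = c then 1 else 0 with hI
  have hGm : ∀ c, Measurable (G c) := by
    intro c
    simp only [hG]
    exact hg.comp (measurable_fst.prodMk measurable_const)
  have hIs : ∀ c : Fin C, MeasurableSet {z : (X × Fin C) | z.2 = c} :=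
    fun c => measurable_snd (measurableSet_singleton c)
  have hIm : ∀ c, Measurable (I c) :=
    fun c => Measurable.ite (hIs c) measurable_const measurable_const
  have hGb : ∀ c z, ‖G c z‖ ≤ M := fun c z => hgb _
  have hIb : ∀ c z, ‖I c z‖ ≤ 1 := by
    intro c z; simp only [hI]; split <;> simp
  -- ∫ I c = p c
  have hIint : ∀ c, ∫ z, I c z ∂D = p c := by
    intro c
    have : I c = Set.indicator {z : (X × Fin C) | z.2 = c} (fun _ => (1:ℝ)) := by
      ext z; simp only [hI, Set.indicator]; split <;> simp_all
    rw [this, integral_indicator_const (1:ℝ) (hIs c), smul_eq_mul, mul_one, hp]; rfl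
  -- rewrite the integrand
  have hintegrand : ∀ ω : Fin k → (X × Fin C), gtil (ω i).1 (fun c => α c ω)
      = (∑ c, ∑ j, I c (ω j) • G c (ω i))
        - ∑ c, (((k:ℝ) - 1) * p c) • G c (ω i) := by
    intro ω
    rw [hgtil, ← Finset.sum_sub_distrib]
    refine Finset.sum_congr rfl fun c _ => ?_
    rw [sub_smul]
    congr 1
    have hkα : (k:ℝ) * α c ω = ∑ j, I c (ω j) := by
      rw [hα]; field_simp [hI]; rfl
    rw [hkα, Finset.sum_smul]
  -- integrability of the atoms
  have hT1m : ∀ (c : Fin C) (j : Fin k),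
      Measurable (fun ω : Fin k → (X × Fin C) => I c (ω j) • G c (ω i)) := fun c j =>
    ((hIm c).comp (measurable_pi_apply j)).smul ((hGm c).comp (measurable_pi_apply i))
  have hT1 : ∀ (c : Fin C) (j : Fin k),
      Integrable (fun ω : Fin k → (X × Fin C) => I c (ω j) • G c (ω i)) μ := by
    intro c j
    refine integrable_of_bdd ((hT1m c j).aestronglyMeasurable) (B := M) fun ω => ?_
    calc ‖I c (ω j) • G c (ω i)‖ = ‖I c (ω j)‖ * ‖G c (ω i)‖ := norm_smul _ _
    _ ≤ 1 * M := mul_le_mul (hIb _ _) (hGb _ _) (norm_nonneg _) zero_le_one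
    _ = M := one_mul M
  have hT2 : ∀ c : Fin C,
      Integrable (fun ω : Fin k → (X × Fin C) => (((k:ℝ) - 1) * p c) • G c (ω i)) μ := by
    intro c
    refine integrable_of_bdd
      ((show Measurable (fun ω : Fin k → (X × Fin C) => (((k:ℝ) - 1) * p c) • G c (ω i)) from
        ((hGm c).comp (measurable_pi_apply i)).const_smul (((k:ℝ) - 1) * p c)).aestronglyMeasurable)
      (B := |((k:ℝ) - 1) * p c| * M) fun ω => ?_
    rw [norm_smul, Real.norm_eq_abs]
    exact mul_le_mul_of_nonneg_left (hGb _ _) (abs_nonneg _)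
  have hGD : ∀ c, Integrable (G c) D := fun c =>
    integrable_of_bdd (hGm c).aestronglyMeasurable (hGb c)
  have hIGD : ∀ c, Integrable (fun z => I c z • G c z) D := by
    intro c
    refine integrable_of_bdd ((hIm c).smul (hGm c)).aestronglyMeasurable (B := M) fun z => ?_
    calc ‖I c z • G c z‖ = ‖I c z‖ * ‖G c z‖ := norm_smul _ _
    _ ≤ 1 * M := mul_le_mul (hIb _ _) (hGb _ _) (norm_nonneg _) zero_le_one
    _ = M := one_mul M
  -- value of each atom integral
  have hatom : ∀ (c : Fin C) (j : Fin k),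
      ∫ ω, I c (ω j) • G c (ω i) ∂μ
        = if j = i then ∫ z, I c z • G c z ∂D else p c • ∫ z, G c z ∂D := by
    intro c j
    split_ifs with h
    · subst h
      have hmap := map_eval_pi D (ι := Fin k) j
      calc ∫ ω, I c (ω j) • G c (ω j) ∂μ
          = ∫ z, I c z • G c z ∂(μ.map fun ω => ω j) := by
            rw [integral_map (measurable_pi_apply j).aemeasurable
              (((hIm c).smul (hGm c)).aestronglyMeasurable)]
      _ = ∫ z, I c z • G c z ∂D := by rw [hmap]
    · have hmap := map_pair_pi D (Ne.symm h)
      have hFm : Measurable (fun zw : (X × Fin C) × (X × Fin C) => I c zw.2 • G c zw.1) :=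
        ((hIm c).comp measurable_snd).smul ((hGm c).comp measurable_fst)
      have hFint : Integrable (fun zw : (X × Fin C) × (X × Fin C) => I c zw.2 • G c zw.1) (D.prod D) := by
        refine integrable_of_bdd hFm.aestronglyMeasurable (B := M) fun zw => ?_
        calc ‖I c zw.2 • G c zw.1‖ = ‖I c zw.2‖ * ‖G c zw.1‖ := norm_smul _ _
        _ ≤ 1 * M := mul_le_mul (hIb _ _) (hGb _ _) (norm_nonneg _) zero_le_one
        _ = M := one_mul M
      calc ∫ ω, I c (ω j) • G c (ω i) ∂μ
          = ∫ zw : (X × Fin C) × (X × Fin C), I c zw.2 • G c zw.1 ∂(μ.map fun ω => (ω i, ω j)) := by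
            rw [integral_map ((measurable_pi_apply i).prodMk
              (measurable_pi_apply j)).aemeasurable hFm.aestronglyMeasurable]
      _ = ∫ zw : (X × Fin C) × (X × Fin C), I c zw.2 • G c zw.1 ∂(D.prod D) := by rw [hmap]
      _ = ∫ z, ∫ w, I c w • G c z ∂D ∂D := integral_prod _ hFint
      _ = ∫ z, (∫ w, I c w ∂D) • G c z ∂D := by
            refine integral_congr_ae (Filter.Eventually.of_forall fun z => ?_)
            exact integral_smul_const (fun w => I c w) (G c z)
      _ = ∫ z, p c • G c z ∂D := by rw [hIint c]
      _ = p c • ∫ z, G c z ∂D := integral_smul _ _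
  -- sum over j
  have hjsum : ∀ c : Fin C,
      ∑ j, ∫ ω, I c (ω j) • G c (ω i) ∂μ
        = (∫ z, I c z • G c z ∂D) + (((k:ℝ) - 1) * p c) • ∫ z, G c z ∂D := by
    intro c
    rw [← Finset.add_sum_erase Finset.univ _ (Finset.mem_univ i)]
    congr 1
    · rw [hatom c i, if_pos rfl]
    · rw [Finset.sum_congr rfl (fun j hj => by
        rw [hatom c j, if_neg (Finset.ne_of_mem_erase hj)])]
      rw [Finset.sum_const, Finset.card_erase_of_mem (Finset.mem_univ i),
        Finset.card_univ, Fintype.card_fin, ← Nat.cast_smul_eq_nsmul ℝ, smul_smul,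
        Nat.cast_sub hk, Nat.cast_one]
  -- final computation
  calc ∫ ω, gtil (ω i).1 (fun c => α c ω) ∂μ
      = ∫ ω, ((∑ c, ∑ j, I c (ω j) • G c (ω i))
          - ∑ c, (((k:ℝ) - 1) * p c) • G c (ω i)) ∂μ :=
        integral_congr_ae (Filter.Eventually.of_forall hintegrand)
    _ = (∫ ω, (∑ c, ∑ j, I c (ω j) • G c (ω i)) ∂μ)
          - ∫ ω, (∑ c, (((k:ℝ) - 1) * p c) • G c (ω i)) ∂μ := by
        exact integral_sub
          (integrable_finset_sum _ fun c _ => integrable_finset_sum _ fun j _ => hT1 c j)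
          (integrable_finset_sum _ fun c _ => hT2 c)
    _ = (∑ c, ∑ j, ∫ ω, I c (ω j) • G c (ω i) ∂μ)
          - ∑ c, ∫ ω, (((k:ℝ) - 1) * p c) • G c (ω i) ∂μ := by
        rw [integral_finset_sum _ fun c _ => integrable_finset_sum _ fun j _ => hT1 c j,
          integral_finset_sum _ fun c _ => hT2 c]
        exact congrArg₂ _ (Finset.sum_congr rfl fun c _ =>
          integral_finset_sum _ fun j _ => hT1 c j) rfl
    _ = (∑ c, ((∫ z, I c z • G c z ∂D) + (((k:ℝ) - 1) * p c) • ∫ z, G c z ∂D))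
          - ∑ c, (((k:ℝ) - 1) * p c) • ∫ z, G c z ∂D := by
        refine congrArg₂ _ (Finset.sum_congr rfl fun c _ => hjsum c)
          (Finset.sum_congr rfl fun c _ => ?_)
        calc ∫ ω, (((k:ℝ) - 1) * p c) • G c (ω i) ∂μ
            = (((k:ℝ) - 1) * p c) • ∫ ω, G c (ω i) ∂μ := integral_smul _ _
          _ = (((k:ℝ) - 1) * p c) • ∫ z, G c z ∂D := by
              congr 1
              rw [← map_eval_pi D (ι := Fin k) i,
                integral_map (measurable_pi_apply i).aemeasurable
                  (hGm c).aestronglyMeasurable]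
    _ = ∑ c, ∫ z, I c z • G c z ∂D := by
        rw [Finset.sum_add_distrib]; ring_nf; abel
    _ = ∫ z, (∑ c, I c z • G c z) ∂D := (integral_finset_sum _ fun c _ => hIGD c).symm
    _ = ∫ z, g z ∂D := by
        refine integral_congr_ae (Filter.Eventually.of_forall fun z => ?_)
        simp only [hI, hG, ite_smul, one_smul, zero_smul, Finset.sum_ite_eq,
          Finset.mem_univ, if_true]
end
end
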